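/- The population quantile minimizes expected check loss: if X is integrable with distribution function F continuous at q, and F(q) = α, then for every v ∈ ℝ, E[π_α(X − v)] ≥ E[π_α(X − q)], where π_α(u) = u(α − 1[u < 0]). -/

import Mathlib

open MeasureTheory

/-- Check function π_a(u) = u(a − 1[u < 0]). -/
noncomputable def check (a u : ℝ) : ℝ := u * (a - if u < 0 then (1 : ℝ) else 0)

lemma check_eq (a u : ℝ) : check a u = a * u - min u 0 := by
  unfold check
  split_ifs with h
  · rw [min_eq_left h.le]; ring
  · rw [min_eq_right (not_lt.mp h)]; ring

lemma check_subgrad (a u w : ℝ) (h0 : 0 ≤ a) (h1 : a ≤ 1) :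
    check a u + (w - u) * (a - if u < 0 then 1 else 0) ≤ check a w := by
  unfold check
  split_ifs with h h' h'
  · nlinarith
  · nlinarith [not_lt.mp h']
  · nlinarith [not_lt.mp h]
  · nlinarith

lemma check_integrable {Ω : Type*} [MeasurableSpace Ω] (μ : Measure Ω) [IsProbabilityMeasure μ]
    (X : Ω → ℝ) (hXm : Measurable X) (hXi : Integrable X μ) (a c : ℝ) :
    Integrable (fun ω => check a (X ω - c)) μ := by
  have h1 : Integrable (fun ω => X ω - c) μ := hXi.sub (integrable_const c)
  have h2 : Integrable (fun ω => min (X ω - c) 0) μ := by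
    refine h1.mono ?_ ?_
    · exact ((hXm.sub_const c).min measurable_const).aestronglyMeasurable
    · filter_upwards with ω
      simp only [Real.norm_eq_abs]
      rcases le_total (X ω - c) 0 with h | h
      · rw [min_eq_left h]
      · rw [min_eq_right h]; simpa using abs_nonneg _
  have : (fun ω => check a (X ω - c)) = fun ω => a * (X ω - c) - min (X ω - c) 0 :=
    funext fun ω => check_eq a (X ω - c)
  rw [this]
  exact (h1.const_mul a).sub h2

/-- The population quantile minimizes expected check loss: if X is integrable with
distribution function F continuous at q and F(q) = α, then for every v,
E[π_α(X − v)] ≥ E[π_α(X − q)]. -/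
theorem stmt_13 {Ω : Type*} [MeasurableSpace Ω] (μ : Measure Ω) [IsProbabilityMeasure μ]
    (X : Ω → ℝ) (hXm : Measurable X) (hXi : Integrable X μ)
    (α : ℝ) (hα : α ∈ Set.Ioo (0 : ℝ) 1) (q : ℝ)
    (hcont : ContinuousAt (fun v => (μ {ω | X ω ≤ v}).toReal) q)
    (hq : (μ {ω | X ω ≤ q}).toReal = α) :
    ∀ v : ℝ, (∫ ω, check α (X ω - q) ∂μ) ≤ ∫ ω, check α (X ω - v) ∂μ := by
  intro v
  set s : Set Ω := {ω | X ω < q} with hs_def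
  have hs : MeasurableSet s := hXm measurableSet_Iio
  -- μ s = α
  have hm : (μ s).toReal = α := by
    have hle : (μ s).toReal ≤ α := by
      rw [← hq]
      exact ENNReal.toReal_mono (measure_ne_top μ _)
        (measure_mono (Set.setOf_subset_setOf.mpr fun ω h => h.le))
    have hge : α ≤ (μ s).toReal := by
      have ht : Filter.Tendsto (fun v => (μ {ω | X ω ≤ v}).toReal)
          (nhdsWithin q (Set.Iio q)) (nhds α) := by
        rw [← hq]
        exact hcont.tendsto.mono_left nhdsWithin_le_nhds
      refine le_of_tendsto ht ?_
      filter_upwards [self_mem_nhdsWithin] with x hx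
      exact ENNReal.toReal_mono (measure_ne_top μ _)
        (measure_mono (Set.setOf_subset_setOf.mpr fun ω h => lt_of_le_of_lt h hx))
    linarith
  -- indicator
  have hind_eq : ∀ ω, (if X ω - q < 0 then (1 : ℝ) else 0) = s.indicator (fun _ => (1:ℝ)) ω := by
    intro ω
    simp only [Set.indicator, hs_def, Set.mem_setOf_eq, sub_neg]
  have hind_int : Integrable (fun ω => (if X ω - q < 0 then (1 : ℝ) else 0)) μ := by
    simp only [hind_eq]
    exact (integrable_const (1:ℝ)).indicator hs
  have hind_integral : (∫ ω, (if X ω - q < 0 then (1 : ℝ) else 0) ∂μ) = (μ s).toReal := by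
    simp only [hind_eq]
    rw [integral_indicator hs]
    simp
    rfl
  -- integrability of everything
  have hiq := check_integrable μ X hXm hXi α q
  have hiv := check_integrable μ X hXm hXi α v
  have hdiff : Integrable (fun ω => (α - if X ω - q < 0 then (1:ℝ) else 0)) μ :=
    (integrable_const α).sub hind_int
  have hterm : Integrable (fun ω => (q - v) * (α - if X ω - q < 0 then (1:ℝ) else 0)) μ :=
    hdiff.const_mul (q - v)
  have hg : Integrable (fun ω => check α (X ω - q)
      + (q - v) * (α - if X ω - q < 0 then (1:ℝ) else 0)) μ :=
    hiq.add hterm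
  have hmono : ∀ ω, check α (X ω - q)
      + (q - v) * (α - if X ω - q < 0 then (1:ℝ) else 0) ≤ check α (X ω - v) := by
    intro ω
    have h := check_subgrad α (X ω - q) (X ω - v) hα.1.le hα.2.le
    have h2 : (X ω - v) - (X ω - q) = q - v := by ring
    rwa [h2] at h
  have hint := integral_mono hg hiv hmono
  calc (∫ ω, check α (X ω - q) ∂μ)
      = ∫ ω, (check α (X ω - q)
        + (q - v) * (α - if X ω - q < 0 then (1:ℝ) else 0)) ∂μ := by
        have hz : (∫ ω, (q - v) * (α - if X ω - q < 0 then (1:ℝ) else 0) ∂μ) = 0 := by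
          rw [integral_const_mul, integral_sub (integrable_const α) hind_int,
            hind_integral, hm, integral_const]
          simp
        rw [integral_add hiq hterm, hz, add_zero]
    _ ≤ ∫ ω, check α (X ω - v) ∂μ := hint
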